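/- (High-probability control.) Suppose that almost surely, for all t ∈ {1,…,T}, s ∈ S, k ∈ [K]: |𝔼[Ã_t(s,k) | F_{t−1}] − A_{q_tΠ}(s,k)| ≤ ε, that almost surely |Ã_t(s,k)| ≤ 1/(1−γ) for all t, s, k, and that almost surely, for every s ∈ S: max_{k∈[K]} ∑_{t=1}^T Ã_t(s,k) ≤ B/(1−γ). Then for every fixed (deterministic) state-dependent weight vector q⋆ over [K], every state s0 ∈ S, and every δ ∈ (0,1), with ℙ-probability at least 1−δ: V_{q⋆Π}(s0) − (1/T) ∑_{t=1}^T V_{q_tΠ}(s0) ≤ ε/(1−γ) + B/((1−γ)² T) + (1/(1−γ)²)·√(2 ln(1/δ)/T). -/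

import Mathlib

open Finset MeasureTheory

/-- The mixture policy `qΠ(a|s) = ∑_k q(k|s) π_k(a|s)` induced by state-dependent weights
`q` over `K` expert policies. -/
noncomputable def mixPolicy {S A : Type*} {K : ℕ}
    (experts : Fin K → S → A → ℝ) (q : S → Fin K → ℝ) : S → A → ℝ :=
  fun s a => ∑ k, q s k * experts k s a


section AuxLemmas
open Real

/-- Hoeffding's lemma, two-point version. -/
lemma hoeffding_scalar (p s : ℝ) (hp0 : 0 ≤ p) (hp1 : p ≤ 1) :
    (1 - p) * exp (-(p * s)) + p * exp (s * (1 - p)) ≤ exp (s ^ 2 / 8) := by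
  rcases eq_or_lt_of_le hp0 with h0 | h0
  · simp [← h0]
    positivity
  rcases eq_or_lt_of_le hp1 with h1 | h1
  · simp [h1]
    positivity
  -- now 0 < p < 1
  set φ : ℝ → ℝ := fun x => 1 - p + p * exp x with hφdef
  have hφpos : ∀ x, 0 < φ x := fun x => by
    have := exp_pos x
    have : 0 < p * exp x := by positivity
    simp only [hφdef]; linarith
  have hφd : ∀ x, HasDerivAt φ (p * exp x) x := fun x => by
    exact ((hasDerivAt_exp x).const_mul p).const_add (1 - p)
  set g : ℝ → ℝ := fun x => x ^ 2 / 8 + p * x - log (φ x) with hgdef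
  set gd : ℝ → ℝ := fun x => x / 4 + p - p * exp x / φ x with hgddef
  have hgd : ∀ x, HasDerivAt g (gd x) x := by
    intro x
    have h1 : HasDerivAt (fun x : ℝ => x ^ 2 / 8 + p * x) (x / 4 + p) x := by
      have := ((hasDerivAt_pow 2 x).div_const 8).add ((hasDerivAt_id x).const_mul p)
      exact this.congr_deriv (by rw [show (2:ℕ) - 1 = 1 from rfl]; push_cast; ring)
    have h2 : HasDerivAt (fun x => log (φ x)) (p * exp x / φ x) x :=
      (hφd x).log (ne_of_gt (hφpos x))
    exact h1.sub h2
  have hgdd : ∀ x, HasDerivAt gd (1 / 4 - p * exp x * (1 - p) / (φ x) ^ 2) x := by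
    intro x
    have h1 : HasDerivAt (fun x : ℝ => x / 4 + p) (1 / 4) x := by
      simpa using ((hasDerivAt_id x).div_const 4).add_const p
    have h2 : HasDerivAt (fun x => p * exp x / φ x)
        ((p * exp x * φ x - p * exp x * (p * exp x)) / (φ x) ^ 2) x :=
      ((hasDerivAt_exp x).const_mul p).div (hφd x) (ne_of_gt (hφpos x))
    have := h1.sub h2
    have e : p * exp x * φ x - p * exp x * (p * exp x) = p * exp x * (1 - p) := by
      simp only [hφdef]; ring
    rw [e] at this
    exact this
  have hgdd_nonneg : ∀ x, 0 ≤ 1 / 4 - p * exp x * (1 - p) / (φ x) ^ 2 := by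
    intro x
    have hφ2 : 0 < (φ x) ^ 2 := pow_pos (hφpos x) 2
    rw [sub_nonneg, div_le_iff₀ hφ2]
    have hφx : φ x = 1 - p + p * exp x := rfl
    rw [hφx]
    nlinarith [sq_nonneg (p * exp x - (1 - p)), exp_pos x]
  -- gd is monotone
  have hgdmono : Monotone gd :=
    monotone_of_deriv_nonneg (fun x => (hgdd x).differentiableAt)
      (fun x => by rw [(hgdd x).deriv]; exact hgdd_nonneg x)
  have hgd0 : gd 0 = 0 := by
    simp only [hgddef, hφdef]
    norm_num
  have hg0 : g 0 = 0 := by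
    simp only [hgdef, hφdef]
    norm_num
  -- g x ≥ 0 for all x
  have hgnonneg : ∀ x, 0 ≤ g x := by
    intro x
    rcases le_total 0 x with hx | hx
    · have hmono : MonotoneOn g (Set.Ici 0) := by
        apply monotoneOn_of_deriv_nonneg (convex_Ici 0)
          (fun y _ => (hgd y).differentiableAt.continuousAt.continuousWithinAt)
          (fun y _ => ((hgd y).differentiableAt).differentiableWithinAt)
        intro y hy
        rw [interior_Ici] at hy
        rw [(hgd y).deriv]
        have : gd 0 ≤ gd y := hgdmono (le_of_lt hy)
        linarith [hgd0 ▸ this]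
      have := hmono Set.self_mem_Ici hx hx
      linarith [hg0 ▸ this]
    · have hmono : AntitoneOn g (Set.Iic 0) := by
        apply antitoneOn_of_deriv_nonpos (convex_Iic 0)
          (fun y _ => (hgd y).differentiableAt.continuousAt.continuousWithinAt)
          (fun y _ => ((hgd y).differentiableAt).differentiableWithinAt)
        intro y hy
        rw [interior_Iic] at hy
        rw [(hgd y).deriv]
        have : gd y ≤ gd 0 := hgdmono (le_of_lt hy)
        linarith [hgd0 ▸ this]
      have := hmono hx Set.self_mem_Iic hx
      linarith [hg0 ▸ this]
  -- conclude
  have hkey := hgnonneg s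
  have hlog : log (φ s) ≤ s ^ 2 / 8 + p * s := by
    simp only [hgdef] at hkey; linarith
  have hLHS : (1 - p) * exp (-(p * s)) + p * exp (s * (1 - p)) = exp (-(p * s)) * φ s := by
    simp only [hφdef]
    rw [show s * (1 - p) = -(p * s) + s by ring, exp_add]
    ring
  rw [hLHS]
  have : exp (-(p * s)) * φ s ≤ exp (-(p * s)) * exp (s ^ 2 / 8 + p * s) := by
    apply mul_le_mul_of_nonneg_left _ (exp_pos _).le
    calc φ s = exp (log (φ s)) := (exp_log (hφpos s)).symm
      _ ≤ exp (s ^ 2 / 8 + p * s) := exp_le_exp.2 hlog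
  calc exp (-(p * s)) * φ s ≤ exp (-(p * s)) * exp (s ^ 2 / 8 + p * s) := this
    _ = exp (s ^ 2 / 8) := by rw [← exp_add]; ring_nf

section scalars
lemma exp_convex_bound (lam c y : ℝ) (hc : 0 < c) (hy : |y| ≤ c) :
    exp (-(lam * y)) ≤ (exp (lam * c) + exp (-(lam * c))) / 2
      + y * ((exp (-(lam * c)) - exp (lam * c)) / (2 * c)) := by
  obtain ⟨hy1, hy2⟩ := abs_le.1 hy
  have hc' : (2 : ℝ) * c ≠ 0 := by positivity
  have hθ0 : 0 ≤ (c - y) / (2 * c) := by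
    apply div_nonneg (by linarith) (by linarith)
  have hθ1 : 0 ≤ (c + y) / (2 * c) := by
    apply div_nonneg (by linarith) (by linarith)
  have hsum : (c - y) / (2 * c) + (c + y) / (2 * c) = 1 := by field_simp; ring
  have h := convexOn_exp.2 (Set.mem_univ (lam * c)) (Set.mem_univ (-(lam * c))) hθ0 hθ1 hsum
  simp only [smul_eq_mul] at h
  have harg : (c - y) / (2 * c) * (lam * c) + (c + y) / (2 * c) * -(lam * c) = -(lam * y) := by
    field_simp; ring
  rw [harg] at h
  calc exp (-(lam * y)) ≤ (c - y) / (2 * c) * exp (lam * c)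
        + (c + y) / (2 * c) * exp (-(lam * c)) := h
    _ = (exp (lam * c) + exp (-(lam * c))) / 2
        + y * ((exp (-(lam * c)) - exp (lam * c)) / (2 * c)) := by field_simp; ring

lemma hoeffding_mean (lam c m : ℝ) (hc : 0 < c) (hm : |m| ≤ c) :
    exp (lam * m) * ((exp (lam * c) + exp (-(lam * c))) / 2
      + m * ((exp (-(lam * c)) - exp (lam * c)) / (2 * c))) ≤ exp (lam ^ 2 * c ^ 2 / 2) := by
  obtain ⟨hm1, hm2⟩ := abs_le.1 hm
  have hp0 : 0 ≤ (c - m) / (2 * c) := div_nonneg (by linarith) (by linarith)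
  have hp1 : (c - m) / (2 * c) ≤ 1 := by
    rw [div_le_one (by linarith)]; linarith
  have key := hoeffding_scalar ((c - m) / (2 * c)) (2 * lam * c) hp0 hp1
  have e1 : -((c - m) / (2 * c) * (2 * lam * c)) = lam * m + -(lam * c) := by field_simp; ring
  have e2 : (2 * lam * c) * (1 - (c - m) / (2 * c)) = lam * m + lam * c := by field_simp; ring
  have e3 : (2 * lam * c) ^ 2 / 8 = lam ^ 2 * c ^ 2 / 2 := by ring
  rw [e1, e2, e3, exp_add, exp_add] at key
  calc exp (lam * m) * ((exp (lam * c) + exp (-(lam * c))) / 2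
        + m * ((exp (-(lam * c)) - exp (lam * c)) / (2 * c)))
      = (1 - (c - m) / (2 * c)) * (exp (lam * m) * exp (-(lam * c)))
        + (c - m) / (2 * c) * (exp (lam * m) * exp (lam * c)) := by field_simp; ring
    _ ≤ exp (lam ^ 2 * c ^ 2 / 2) := key
end scalars

lemma stoch_matrix_inv {S : Type*} [Fintype S] [Nonempty S] [DecidableEq S]
    (γ : ℝ) (hγ0 : 0 < γ) (hγ1 : γ < 1)
    (Pm : Matrix S S ℝ) (hP0 : ∀ i j, 0 ≤ Pm i j) (hP1 : ∀ i, ∑ j, Pm i j = 1) :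
    ∃ N : Matrix S S ℝ, (∀ i j, 0 ≤ N i j) ∧ (∀ i, ∑ j, N i j = 1 / (1 - γ)) ∧
      ∀ f g : S → ℝ, (∀ i, g i = f i + γ * ∑ j, Pm i j * g j) →
        ∀ i, g i = ∑ j, N i j * f j := by
  have h1γ : 0 < 1 - γ := by linarith
  set M : Matrix S S ℝ := 1 - γ • Pm with hMdef
  have hMapp : ∀ (x : S → ℝ) (i : S), M.mulVec x i = x i - γ * ∑ j, Pm i j * x j := by
    intro x i
    have hPv : (Pm.mulVec x) i = ∑ j, Pm i j * x j := by
      simp [Matrix.mulVec, dotProduct]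
    rw [hMdef, Matrix.sub_mulVec, Matrix.smul_mulVec, Matrix.one_mulVec]
    simp [hPv]
  -- injectivity of mulVec
  have hker : ∀ x : S → ℝ, M.mulVec x = 0 → x = 0 := by
    intro x hx
    have hfix : ∀ i, x i = γ * ∑ j, Pm i j * x j := by
      intro i
      have := congr_fun hx i
      rw [hMapp] at this
      simp only [Pi.zero_apply] at this
      linarith
    obtain ⟨i₀, -, hmax⟩ := Finset.exists_max_image (Finset.univ : Finset S)
      (fun i => |x i|) ⟨Classical.arbitrary S, Finset.mem_univ _⟩
    have hbd : |x i₀| ≤ γ * |x i₀| := by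
      calc |x i₀| = γ * |∑ j, Pm i₀ j * x j| := by
            rw [hfix i₀, abs_mul, abs_of_pos hγ0]
        _ ≤ γ * ∑ j, Pm i₀ j * |x i₀| := by
            apply mul_le_mul_of_nonneg_left _ hγ0.le
            calc |∑ j, Pm i₀ j * x j| ≤ ∑ j, |Pm i₀ j * x j| := Finset.abs_sum_le_sum_abs _ _
              _ ≤ ∑ j, Pm i₀ j * |x i₀| := by
                  apply Finset.sum_le_sum
                  intro j _
                  rw [abs_mul, abs_of_nonneg (hP0 i₀ j)]
                  exact mul_le_mul_of_nonneg_left (hmax j (Finset.mem_univ j)) (hP0 i₀ j)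
        _ = γ * |x i₀| := by rw [← Finset.sum_mul, hP1 i₀, one_mul]
    have hzero : |x i₀| = 0 := by nlinarith [abs_nonneg (x i₀)]
    funext i
    have : |x i| ≤ 0 := le_trans (hmax i (Finset.mem_univ i)) (le_of_eq hzero)
    exact abs_eq_zero.mp (le_antisymm this (abs_nonneg _))
  have hinj : Function.Injective M.mulVec := by
    intro x y hxy
    have : M.mulVec (x - y) = 0 := by
      rw [Matrix.mulVec_sub, hxy, sub_self]
    have := hker _ this
    exact sub_eq_zero.1 this
  have hU : IsUnit M := Matrix.mulVec_injective_iff_isUnit.mp hinj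
  have hUdet : IsUnit M.det := (Matrix.isUnit_iff_isUnit_det M).1 hU
  set N : Matrix S S ℝ := M⁻¹ with hNdef
  have hMN : M * N = 1 := Matrix.mul_nonsing_inv _ hUdet
  have hNM : N * M = 1 := Matrix.nonsing_inv_mul _ hUdet
  -- identity N i j = 1 i j + γ * ∑ k, Pm i k * N k j
  have hNid : ∀ i j, N i j = (1 : Matrix S S ℝ) i j + γ * ∑ k, Pm i k * N k j := by
    intro i j
    have h := congr_fun (congr_fun hMN i) j
    rw [hMdef] at h
    rw [Matrix.sub_mul, Matrix.one_mul, Matrix.smul_mul] at h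
    simp only [Matrix.sub_apply, Matrix.smul_apply, Matrix.mul_apply, smul_eq_mul] at h
    linarith [h]
  -- nonnegativity
  have hN0 : ∀ i j, 0 ≤ N i j := by
    obtain ⟨⟨i₀, j₀⟩, -, hmin⟩ := Finset.exists_min_image (Finset.univ : Finset (S × S))
      (fun p => N p.1 p.2) ⟨(Classical.arbitrary S, Classical.arbitrary S), Finset.mem_univ _⟩
    have hmin' : ∀ i j, N i₀ j₀ ≤ N i j := fun i j => hmin (i, j) (Finset.mem_univ _)
    have hm : 0 ≤ N i₀ j₀ := by
      have h := hNid i₀ j₀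
      have h1 : (0 : ℝ) ≤ (1 : Matrix S S ℝ) i₀ j₀ := by
        rw [Matrix.one_apply]
        split <;> norm_num
      have h2 : ∑ k, Pm i₀ k * N i₀ j₀ ≤ ∑ k, Pm i₀ k * N k j₀ := by
        apply Finset.sum_le_sum
        intro k _
        exact mul_le_mul_of_nonneg_left (hmin' k j₀) (hP0 i₀ k)
      have h3 : ∑ k, Pm i₀ k * N i₀ j₀ = N i₀ j₀ := by
        rw [← Finset.sum_mul, hP1 i₀, one_mul]
      nlinarith
    intro i j
    exact le_trans hm (hmin' i j)
  -- row sums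
  have hNsum : ∀ i, ∑ j, N i j = 1 / (1 - γ) := by
    intro i
    set w : S → ℝ := fun _ => 1 / (1 - γ) with hwdef
    have hMw : M.mulVec w = fun _ => 1 := by
      funext i'
      rw [hMapp]
      simp only [hwdef]
      rw [show ∑ j, Pm i' j * (1 / (1 - γ)) = 1 / (1 - γ) from by
        rw [← Finset.sum_mul, hP1 i', one_mul]]
      field_simp
    have : N.mulVec (M.mulVec w) = w := by
      rw [Matrix.mulVec_mulVec, hNM, Matrix.one_mulVec]
    rw [hMw] at this
    simpa [Matrix.mulVec, dotProduct, hwdef] using congr_fun this i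
  refine ⟨N, hN0, hNsum, ?_⟩
  intro f g hg
  have hMg : M.mulVec g = f := by
    funext i
    rw [hMapp]
    have := hg i
    linarith
  have : N.mulVec (M.mulVec g) = g := by
    rw [Matrix.mulVec_mulVec, hNM, Matrix.one_mulVec]
  rw [hMg] at this
  intro i
  rw [← congr_fun this i]
  simp [Matrix.mulVec, dotProduct]

lemma int_of_bdd {Ω : Type*} {mΩ : MeasurableSpace Ω} {P : Measure Ω} [IsFiniteMeasure P]
    {f : Ω → ℝ} {C : ℝ} (hmeas : AEStronglyMeasurable f P) (h : ∀ᵐ ω ∂P, |f ω| ≤ C) :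
    Integrable f P :=
  (integrable_const C).mono' hmeas (by filter_upwards [h] with ω hω; simpa using hω)

lemma azuma_aux {Ω : Type*} {mΩ : MeasurableSpace Ω} (P : Measure Ω) [IsProbabilityMeasure P]
    (F : Filtration ℕ mΩ) (c lam : ℝ) (hc : 0 < c) (hlam : 0 ≤ lam)
    (Y : ℕ → Ω → ℝ) (hYmeas : ∀ n, StronglyMeasurable[F (n + 1)] (Y n))
    (hYbd : ∀ n, ∀ᵐ ω ∂P, |Y n ω| ≤ c) :
    ∀ n, ∫ ω, exp (lam * ∑ i ∈ Finset.range n, ((P[Y i|F i]) ω - Y i ω)) ∂P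
      ≤ exp (n * (lam ^ 2 * c ^ 2 / 2)) := by
  set α : ℝ := (exp (lam * c) + exp (-(lam * c))) / 2 with hα
  set β : ℝ := (exp (-(lam * c)) - exp (lam * c)) / (2 * c) with hβ
  set m : ℕ → Ω → ℝ := fun n => P[Y n|F n] with hmdef
  have hYm : ∀ n, AEStronglyMeasurable (Y n) P :=
    fun n => ((hYmeas n).mono (F.le _)).aestronglyMeasurable
  have hYint : ∀ n, Integrable (Y n) P := fun n => int_of_bdd (hYm n) (hYbd n)
  have hmmeas : ∀ n, StronglyMeasurable[F n] (m n) := fun n => stronglyMeasurable_condExp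
  have hmbd : ∀ n, ∀ᵐ ω ∂P, |m n ω| ≤ c := by
    intro n
    have h1 : m n ≤ᵐ[P] fun _ => c := by
      have h := condExp_mono (m := F n) (μ := P) (hYint n) (integrable_const c)
        ((hYbd n).mono fun ω h => (abs_le.1 h).2)
      rwa [condExp_const (F.le n)] at h
    have h2 : (fun _ => (-c : ℝ)) ≤ᵐ[P] m n := by
      have h := condExp_mono (m := F n) (μ := P) (integrable_const (-c)) (hYint n)
        ((hYbd n).mono fun ω h => (abs_le.1 h).1)
      rwa [condExp_const (F.le n)] at h
    filter_upwards [h1, h2] with ω hω1 hω2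
    rw [abs_le]; exact ⟨hω2, hω1⟩
  set D : ℕ → Ω → ℝ := fun n ω => m n ω - Y n ω with hDdef
  set Sn : ℕ → Ω → ℝ := fun n ω => ∑ i ∈ Finset.range n, D i ω with hSdef
  have hSmeas : ∀ n, StronglyMeasurable[F n] (Sn n) := by
    intro n
    apply Finset.stronglyMeasurable_fun_sum
    intro i hi
    have hi' := Finset.mem_range.1 hi
    exact ((hmmeas i).mono (F.mono hi'.le)).sub ((hYmeas i).mono (F.mono hi'))
  have hall : ∀ᵐ ω ∂P, ∀ i, |Y i ω| ≤ c ∧ |m i ω| ≤ c :=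
    ae_all_iff.2 fun i => (hYbd i).and (hmbd i)
  have hSbd : ∀ n, ∀ᵐ ω ∂P, |Sn n ω| ≤ n * (2 * c) := by
    intro n
    filter_upwards [hall] with ω hω
    calc |Sn n ω| ≤ ∑ i ∈ Finset.range n, |D i ω| := Finset.abs_sum_le_sum_abs _ _
      _ ≤ ∑ _i ∈ Finset.range n, 2 * c := by
          apply Finset.sum_le_sum
          intro i _
          have h1 := (hω i).1
          have h2 := (hω i).2
          calc |D i ω| ≤ |m i ω| + |Y i ω| := abs_sub _ _
            _ ≤ 2 * c := by linarith
      _ = n * (2 * c) := by simp [Finset.sum_const, Finset.card_range]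
  have hSint : ∀ n, Integrable (fun ω => exp (lam * Sn n ω)) P := by
    intro n
    apply int_of_bdd (((Real.continuous_exp.comp_stronglyMeasurable
      (stronglyMeasurable_const.mul ((hSmeas n).mono (F.le n))))).aestronglyMeasurable)
    filter_upwards [hSbd n] with ω hω
    rw [abs_of_pos (exp_pos _)]
    apply exp_le_exp.2
    calc lam * Sn n ω ≤ lam * (n * (2 * c)) := by
          apply mul_le_mul_of_nonneg_left _ hlam
          exact le_trans (le_abs_self _) hω
      _ ≤ lam * (n * (2 * c)) := le_refl _
  intro n
  induction n with
  | zero =>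
    simp [hSdef]
  | succ n ih =>
    -- notation
    set W : Ω → ℝ := fun ω => exp (lam * Sn n ω + lam * m n ω) with hWdef
    have hWmeas : StronglyMeasurable[F n] W :=
      Real.continuous_exp.comp_stronglyMeasurable
        ((stronglyMeasurable_const.mul (hSmeas n)).add (stronglyMeasurable_const.mul (hmmeas n)))
    have hWmeas' : StronglyMeasurable W := hWmeas.mono (F.le n)
    set bW : ℝ := exp (lam * (n * (2 * c)) + lam * c) with hbW
    have hWbd : ∀ᵐ ω ∂P, |W ω| ≤ bW := by
      filter_upwards [hSbd n, hmbd n] with ω h1 h2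
      rw [abs_of_pos (exp_pos _)]
      apply exp_le_exp.2
      have e1 : lam * Sn n ω ≤ lam * (n * (2 * c)) :=
        mul_le_mul_of_nonneg_left (le_trans (le_abs_self _) h1) hlam
      have e2 : lam * m n ω ≤ lam * c :=
        mul_le_mul_of_nonneg_left (le_trans (le_abs_self _) h2) hlam
      linarith
    have hWnonneg : ∀ ω, 0 ≤ W ω := fun ω => (exp_pos _).le
    have hWint : Integrable W P := int_of_bdd hWmeas'.aestronglyMeasurable hWbd
    have hYmeas' : StronglyMeasurable (Y n) := (hYmeas n).mono (F.le _)
    have hmmeas' : StronglyMeasurable (m n) := (hmmeas n).mono (F.le _)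
    -- integrabilities
    have hint1 : Integrable (fun ω => W ω * exp (-(lam * Y n ω))) P := by
      have hms : AEStronglyMeasurable (fun ω => W ω * exp (-(lam * Y n ω))) P := by
        exact (hWmeas'.mul (Real.continuous_exp.comp_stronglyMeasurable
          ((stronglyMeasurable_const.mul hYmeas').neg))).aestronglyMeasurable
      apply int_of_bdd hms (C := bW * exp (lam * c))
      filter_upwards [hWbd, hYbd n] with ω h1 h2
      rw [abs_mul]
      have h3 : |exp (-(lam * Y n ω))| ≤ exp (lam * c) := by
        rw [abs_of_pos (exp_pos _)]
        apply exp_le_exp.2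
        have hyc : -(Y n ω) ≤ c := neg_le.1 (abs_le.1 h2).1
        calc -(lam * Y n ω) = lam * (-(Y n ω)) := by ring
          _ ≤ lam * c := mul_le_mul_of_nonneg_left hyc hlam
      exact mul_le_mul h1 h3 (abs_nonneg _) (le_trans (abs_nonneg _) h1)
    have hint2 : Integrable (fun ω => W ω * (α + Y n ω * β)) P := by
      have hms : AEStronglyMeasurable (fun ω => W ω * (α + Y n ω * β)) P := by
        exact (hWmeas'.mul ((stronglyMeasurable_const.add
          (hYmeas'.mul stronglyMeasurable_const)))).aestronglyMeasurable
      apply int_of_bdd hms (C := bW * (|α| + c * |β|))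
      filter_upwards [hWbd, hYbd n] with ω h1 h2
      rw [abs_mul]
      apply mul_le_mul h1 _ (abs_nonneg _) (le_trans (abs_nonneg _) h1)
      calc |α + Y n ω * β| ≤ |α| + |Y n ω * β| := abs_add_le _ _
        _ ≤ |α| + c * |β| := by
            rw [abs_mul]
            have := mul_le_mul_of_nonneg_right h2 (abs_nonneg β)
            linarith
    have hintWY : Integrable (W * Y n) P := by
      have hms : AEStronglyMeasurable (W * Y n) P := by
        exact (hWmeas'.mul hYmeas').aestronglyMeasurable
      apply int_of_bdd hms (C := bW * c)
      filter_upwards [hWbd, hYbd n] with ω h1 h2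
      rw [Pi.mul_apply, abs_mul]

      exact mul_le_mul h1 h2 (abs_nonneg _) (le_trans (abs_nonneg _) h1)
    have hintWm : Integrable (fun ω => W ω * m n ω) P := by
      have hms : AEStronglyMeasurable (fun ω => W ω * m n ω) P := by
        exact (hWmeas'.mul hmmeas').aestronglyMeasurable
      apply int_of_bdd hms (C := bW * c)
      filter_upwards [hWbd, hmbd n] with ω h1 h2
      rw [abs_mul]
      exact mul_le_mul h1 h2 (abs_nonneg _) (le_trans (abs_nonneg _) h1)
    have hint3 : Integrable (fun ω => W ω * (α + m n ω * β)) P := by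
      have hms : AEStronglyMeasurable (fun ω => W ω * (α + m n ω * β)) P := by
        exact (hWmeas'.mul ((stronglyMeasurable_const.add
          (hmmeas'.mul stronglyMeasurable_const)))).aestronglyMeasurable
      apply int_of_bdd hms (C := bW * (|α| + c * |β|))
      filter_upwards [hWbd, hmbd n] with ω h1 h2
      rw [abs_mul]
      apply mul_le_mul h1 _ (abs_nonneg _) (le_trans (abs_nonneg _) h1)
      calc |α + m n ω * β| ≤ |α| + |m n ω * β| := abs_add_le _ _
        _ ≤ |α| + c * |β| := by
            rw [abs_mul]
            have := mul_le_mul_of_nonneg_right h2 (abs_nonneg β)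
            linarith
    -- the key conditional-expectation swap
    have hswap : ∫ ω, (W * Y n) ω ∂P = ∫ ω, W ω * m n ω ∂P := by
      have h1 : P[W * Y n|F n] =ᵐ[P] W * m n :=
        condExp_mul_of_stronglyMeasurable_left hWmeas hintWY (hYint n)
      calc ∫ ω, (W * Y n) ω ∂P = ∫ ω, (P[W * Y n|F n]) ω ∂P :=
            (integral_condExp (F.le n)).symm
        _ = ∫ ω, (W * m n) ω ∂P := integral_congr_ae h1
        _ = ∫ ω, W ω * m n ω ∂P := rfl
    -- main chain
    have hchain : ∫ ω, exp (lam * Sn (n + 1) ω) ∂P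
        ≤ exp (lam ^ 2 * c ^ 2 / 2) * ∫ ω, exp (lam * Sn n ω) ∂P := by
      have hsplit : ∀ ω, exp (lam * Sn (n + 1) ω) = W ω * exp (-(lam * Y n ω)) := by
        intro ω
        rw [hWdef, ← Real.exp_add]
        congr 1
        simp only [hSdef, hDdef, Finset.sum_range_succ]
        ring
      calc ∫ ω, exp (lam * Sn (n + 1) ω) ∂P
          = ∫ ω, W ω * exp (-(lam * Y n ω)) ∂P := by
            apply integral_congr_ae (Filter.Eventually.of_forall hsplit)
        _ ≤ ∫ ω, W ω * (α + Y n ω * β) ∂P := by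
            apply integral_mono_ae hint1 hint2
            filter_upwards [hYbd n] with ω hω
            exact mul_le_mul_of_nonneg_left (exp_convex_bound lam c (Y n ω) hc hω) (hWnonneg ω)
        _ = α * ∫ ω, W ω ∂P + β * ∫ ω, (W * Y n) ω ∂P := by
            have e : (fun ω => W ω * (α + Y n ω * β))
                = fun ω => α * W ω + β * (W * Y n) ω := by
              funext ω; simp only [Pi.mul_apply]; ring
            rw [e, integral_add ((hWint.const_mul α)) (hintWY.const_mul β),
              integral_const_mul, integral_const_mul]
        _ = α * ∫ ω, W ω ∂P + β * ∫ ω, W ω * m n ω ∂P := by rw [hswap]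
        _ = ∫ ω, W ω * (α + m n ω * β) ∂P := by
            have e : (fun ω => W ω * (α + m n ω * β))
                = fun ω => α * W ω + β * (W ω * m n ω) := by
              funext ω; ring
            rw [e, integral_add ((hWint.const_mul α)) (hintWm.const_mul β),
              integral_const_mul, integral_const_mul]
        _ ≤ ∫ ω, exp (lam * Sn n ω) * exp (lam ^ 2 * c ^ 2 / 2) ∂P := by
            apply integral_mono_ae hint3 ((hSint n).mul_const _)
            filter_upwards [hmbd n] with ω hω
            have key := hoeffding_mean lam c (m n ω) hc hω
            have e : W ω * (α + m n ω * β)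
                = exp (lam * Sn n ω) * (exp (lam * m n ω) * (α + m n ω * β)) := by
              simp only [hWdef]
              rw [Real.exp_add]; ring
            rw [e]
            exact mul_le_mul_of_nonneg_left key (exp_pos _).le
        _ = exp (lam ^ 2 * c ^ 2 / 2) * ∫ ω, exp (lam * Sn n ω) ∂P := by
            rw [integral_mul_const]; ring
    calc ∫ ω, exp (lam * Sn (n + 1) ω) ∂P
        ≤ exp (lam ^ 2 * c ^ 2 / 2) * ∫ ω, exp (lam * Sn n ω) ∂P := hchain
      _ ≤ exp (lam ^ 2 * c ^ 2 / 2) * exp (n * (lam ^ 2 * c ^ 2 / 2)) :=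
          mul_le_mul_of_nonneg_left ih (exp_pos _).le
      _ = exp ((n + 1 : ℕ) * (lam ^ 2 * c ^ 2 / 2)) := by
          rw [← Real.exp_add]
          congr 1
          push_cast
          ring

lemma bellman_diff {S A : Type*} [Fintype S] [Fintype A] {K : ℕ}
    (T : S → A → S → ℝ) (r : S → A → ℝ) (γ : ℝ)
    (experts : Fin K → S → A → ℝ) (hexp1 : ∀ k s, ∑ a, experts k s a = 1)
    (qstar : S → Fin K → ℝ) (hqs1 : ∀ s, ∑ k, qstar s k = 1)
    (Vstar Vt : S → ℝ)
    (hVstar : ∀ s, Vstar s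
      = ∑ a, mixPolicy experts qstar s a * (r s a + γ * ∑ s', T s a s' * Vstar s'))
    (s : S) :
    Vstar s - Vt s
      = (∑ k, qstar s k * ∑ a, experts k s a *
          ((r s a + γ * ∑ s', T s a s' * Vt s') - Vt s))
        + γ * ∑ s', (∑ a, mixPolicy experts qstar s a * T s a s') * (Vstar s' - Vt s') := by
  have A1gen : ∀ (Q : A → ℝ) (vs : ℝ),
      (∑ k, qstar s k * ∑ a, experts k s a * (Q a - vs))
        = (∑ a, mixPolicy experts qstar s a * Q a) - vs := by
    intro Q vs
    have e1 : ∀ k, qstar s k * ∑ a, experts k s a * (Q a - vs)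
        = (∑ a, qstar s k * experts k s a * Q a) - qstar s k * vs := by
      intro k
      rw [Finset.mul_sum,
        show (∑ a, qstar s k * (experts k s a * (Q a - vs)))
          = ∑ a, (qstar s k * experts k s a * Q a - qstar s k * experts k s a * vs) from
          Finset.sum_congr rfl fun a _ => by ring,
        Finset.sum_sub_distrib]
      congr 1
      rw [← Finset.sum_mul, ← Finset.mul_sum, hexp1 k s, mul_one]
    calc ∑ k, qstar s k * ∑ a, experts k s a * (Q a - vs)
        = ∑ k, ((∑ a, qstar s k * experts k s a * Q a) - qstar s k * vs) :=
          Finset.sum_congr rfl fun k _ => e1 k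
      _ = (∑ k, ∑ a, qstar s k * experts k s a * Q a) - (∑ k, qstar s k * vs) :=
          by rw [Finset.sum_sub_distrib]
      _ = (∑ a, ∑ k, qstar s k * experts k s a * Q a) - vs := by
          rw [Finset.sum_comm, ← Finset.sum_mul, hqs1 s, one_mul]
      _ = (∑ a, mixPolicy experts qstar s a * Q a) - vs := by
          congr 1
          exact Finset.sum_congr rfl fun a _ => by
            rw [show mixPolicy experts qstar s a = ∑ k, qstar s k * experts k s a from rfl,
              Finset.sum_mul]
  have A2gen : ∀ (U W : S → ℝ),
      ∑ s', (∑ a, mixPolicy experts qstar s a * T s a s') * (U s' - W s')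
        = (∑ a, mixPolicy experts qstar s a * (∑ s', T s a s' * U s'))
          - (∑ a, mixPolicy experts qstar s a * (∑ s', T s a s' * W s')) := by
    intro U W
    calc ∑ s', (∑ a, mixPolicy experts qstar s a * T s a s') * (U s' - W s')
        = ∑ s', ∑ a, (mixPolicy experts qstar s a * (T s a s' * U s')
            - mixPolicy experts qstar s a * (T s a s' * W s')) := by
          refine Finset.sum_congr rfl fun s' _ => ?_
          rw [Finset.sum_mul]
          exact Finset.sum_congr rfl fun a _ => by ring
      _ = ∑ a, ∑ s', (mixPolicy experts qstar s a * (T s a s' * U s')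
            - mixPolicy experts qstar s a * (T s a s' * W s')) := Finset.sum_comm
      _ = (∑ a, mixPolicy experts qstar s a * (∑ s', T s a s' * U s'))
          - (∑ a, mixPolicy experts qstar s a * (∑ s', T s a s' * W s')) := by
          rw [← Finset.sum_sub_distrib]
          refine Finset.sum_congr rfl fun a _ => ?_
          rw [Finset.sum_sub_distrib, ← Finset.mul_sum, ← Finset.mul_sum]
  rw [A1gen (fun a => r s a + γ * ∑ s', T s a s' * Vt s') (Vt s), A2gen Vstar Vt]
  have A4 : ∑ a, mixPolicy experts qstar s a * (r s a + γ * ∑ s', T s a s' * Vstar s')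
      = ∑ a, (mixPolicy experts qstar s a * (r s a + γ * ∑ s', T s a s' * Vt s')
          + (γ * (mixPolicy experts qstar s a * (∑ s', T s a s' * Vstar s'))
            - γ * (mixPolicy experts qstar s a * (∑ s', T s a s' * Vt s')))) :=
    Finset.sum_congr rfl fun a _ => by ring
  rw [hVstar s, A4, Finset.sum_add_distrib, Finset.sum_sub_distrib,
    ← Finset.mul_sum, ← Finset.mul_sum]
  ring

end AuxLemmas

set_option maxHeartbeats 1000000 in
/-- High-probability control: under a conditional bias bound `ε`, almost-sure boundedness
`|Ã_t(s,k)| ≤ 1/(1−γ)`, and the almost-sure regret bound `max_k ∑_t Ã_t(s,k) ≤ B/(1−γ)`,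
for every fixed state-dependent weight vector `q⋆`, state `s0`, and `δ ∈ (0,1)`, with
probability at least `1−δ`:
`V_{q⋆Π}(s0) − (1/T) ∑_t V_{q_tΠ}(s0)
   ≤ ε/(1−γ) + B/((1−γ)² T) + (1/(1−γ)²)·√(2 ln(1/δ)/T)`. -/
theorem high_probability_control
    {S A : Type*} [Fintype S] [Fintype A] [Nonempty S] [Nonempty A]
    (T : S → A → S → ℝ) (hT0 : ∀ s a s', 0 ≤ T s a s')
    (hT1 : ∀ s a, ∑ s', T s a s' = 1)
    (r : S → A → ℝ) (hr0 : ∀ s a, 0 ≤ r s a) (hr1 : ∀ s a, r s a ≤ 1)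
    (γ : ℝ) (hγ0 : 0 < γ) (hγ1 : γ < 1)
    (K : ℕ) (hK : 2 ≤ K)
    (experts : Fin K → S → A → ℝ)
    (hexp0 : ∀ k s a, 0 ≤ experts k s a)
    (hexp1 : ∀ k s, ∑ a, experts k s a = 1)
    (Tn : ℕ) (hTn : 0 < Tn)
    {Ω : Type*} {mΩ : MeasurableSpace Ω} (P : Measure Ω) [IsProbabilityMeasure P]
    (F : Filtration ℕ mΩ)
    (ε B : ℝ) (hε : 0 ≤ ε) (hB : 0 < B)
    -- the random state-dependent weights `q_t`, with `q_t` being `F_{t-1}`-measurable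
    (q : Fin Tn → Ω → S → Fin K → ℝ)
    (hq0 : ∀ t ω s k, 0 ≤ q t ω s k) (hq1 : ∀ t ω s, ∑ k, q t ω s k = 1)
    (hqmeas : ∀ t s k, StronglyMeasurable[F t.val] (fun ω => q t ω s k))
    -- the (random) value functions of the mixture policies `q_tΠ`
    (V : Fin Tn → Ω → S → ℝ)
    (hV : ∀ t ω s, V t ω s
      = ∑ a, mixPolicy experts (q t ω) s a * (r s a + γ * ∑ s', T s a s' * V t ω s'))
    -- the estimated expert advantages `Ã_t(s,k)`, with `Ã_t` being `F_t`-measurable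
    (Atil : Fin Tn → S → Fin K → Ω → ℝ)
    (hAmeas : ∀ t s k, StronglyMeasurable[F (t.val + 1)] (Atil t s k))
    -- conditional bias at most ε
    (hbias : ∀ t s k, ∀ᵐ ω ∂P,
      |(P[Atil t s k | F t.val]) ω -
        (∑ a, experts k s a *
          ((r s a + γ * ∑ s', T s a s' * V t ω s') - V t ω s))| ≤ ε)
    -- almost-sure boundedness of the estimated advantages
    (hAbd : ∀ t s k, ∀ᵐ ω ∂P, |Atil t s k ω| ≤ 1 / (1 - γ))
    -- almost-sure regret bound on the estimated advantages
    (hregret : ∀ᵐ ω ∂P, ∀ s k, ∑ t, Atil t s k ω ≤ B / (1 - γ))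
    -- a fixed (deterministic) comparison mixture `q⋆Π` and its value function
    (qstar : S → Fin K → ℝ)
    (hqs0 : ∀ s k, 0 ≤ qstar s k) (hqs1 : ∀ s, ∑ k, qstar s k = 1)
    (Vstar : S → ℝ)
    (hVstar : ∀ s, Vstar s
      = ∑ a, mixPolicy experts qstar s a * (r s a + γ * ∑ s', T s a s' * Vstar s'))
    (s0 : S)
    (δ : ℝ) (hδ0 : 0 < δ) (hδ1 : δ < 1) :
    ENNReal.ofReal (1 - δ) ≤
      P {ω | Vstar s0 - (1 / (Tn : ℝ)) * ∑ t, V t ω s0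
        ≤ ε / (1 - γ) + B / ((1 - γ) ^ 2 * Tn)
          + (1 / (1 - γ) ^ 2) * Real.sqrt (2 * Real.log (1 / δ) / Tn)} := by
  classical
  have h1γ : 0 < 1 - γ := by linarith
  set c : ℝ := 1 / (1 - γ) with hcdef
  have hcpos : 0 < c := by positivity
  have hc1 : c * (1 - γ) = 1 := by rw [hcdef]; field_simp
  -- mixture policy of qstar
  have hmp0 : ∀ s a, 0 ≤ mixPolicy experts qstar s a := fun s a =>
    Finset.sum_nonneg fun k _ => mul_nonneg (hqs0 s k) (hexp0 k s a)
  have hmp1 : ∀ s : S, ∑ a, mixPolicy experts qstar s a = 1 := by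
    intro s
    rw [show (∑ a, mixPolicy experts qstar s a) = ∑ a, ∑ k, qstar s k * experts k s a from
      rfl, Finset.sum_comm]
    calc ∑ k, ∑ a, qstar s k * experts k s a
        = ∑ k, qstar s k * ∑ a, experts k s a :=
          Finset.sum_congr rfl fun k _ => (Finset.mul_sum _ _ _).symm
      _ = 1 := by simp only [hexp1, mul_one]; exact hqs1 s
  -- transition matrix
  set Pm : Matrix S S ℝ := fun s s' => ∑ a, mixPolicy experts qstar s a * T s a s' with hPmdef
  have hPm0 : ∀ s s', 0 ≤ Pm s s' := fun s s' =>
    Finset.sum_nonneg fun a _ => mul_nonneg (hmp0 s a) (hT0 s a s')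
  have hPm1 : ∀ s, ∑ s', Pm s s' = 1 := by
    intro s
    rw [show (∑ s', Pm s s') = ∑ s', ∑ a, mixPolicy experts qstar s a * T s a s' from rfl,
      Finset.sum_comm]
    calc ∑ a, ∑ s', mixPolicy experts qstar s a * T s a s'
        = ∑ a, mixPolicy experts qstar s a * ∑ s', T s a s' :=
          Finset.sum_congr rfl fun a _ => (Finset.mul_sum _ _ _).symm
      _ = 1 := by simp only [hT1, mul_one]; exact hmp1 s
  obtain ⟨N, hN0, hNsum, hNsolve⟩ := stoch_matrix_inv γ hγ0 hγ1 Pm hPm0 hPm1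
  have hNsum' : ∑ s, N s0 s = c := by rw [hNsum s0, ← hcdef]
  -- weights
  set w : S × Fin K → ℝ := fun p => (1 - γ) * N s0 p.1 * qstar p.1 p.2 with hwdef
  have hw0 : ∀ p, 0 ≤ w p := fun p =>
    mul_nonneg (mul_nonneg h1γ.le (hN0 s0 p.1)) (hqs0 p.1 p.2)
  have hwsum : ∑ p : S × Fin K, w p = 1 := by
    rw [Fintype.sum_prod_type]
    calc ∑ s, ∑ k, w (s, k)
        = ∑ s, (1 - γ) * N s0 s * ∑ k, qstar s k := by
          refine Finset.sum_congr rfl fun s _ => ?_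
          rw [Finset.mul_sum]
      _ = (1 - γ) * ∑ s, N s0 s := by
          simp only [hqs1, mul_one, ← Finset.mul_sum]
      _ = 1 := by rw [hNsum', hcdef]; field_simp
  -- integrability
  have hAint : ∀ t s k, Integrable (Atil t s k) P := fun t s k =>
    int_of_bdd ((hAmeas t s k).mono (F.le _)).aestronglyMeasurable (hAbd t s k)
  -- the martingale increments
  set Y' : ℕ → Ω → ℝ := fun n ω =>
    if h : n < Tn then ∑ p : S × Fin K, w p * Atil ⟨n, h⟩ p.1 p.2 ω else 0 with hY'def
  have hY'meas : ∀ n, StronglyMeasurable[F (n + 1)] (Y' n) := by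
    intro n
    by_cases h : n < Tn
    · simp only [hY'def, dif_pos h]
      apply Finset.stronglyMeasurable_fun_sum
      intro p _
      exact stronglyMeasurable_const.mul (hAmeas ⟨n, h⟩ p.1 p.2)
    · simp only [hY'def, dif_neg h]
      exact stronglyMeasurable_const
  have hY'bd : ∀ n, ∀ᵐ ω ∂P, |Y' n ω| ≤ c := by
    intro n
    by_cases h : n < Tn
    · have hall : ∀ᵐ ω ∂P, ∀ p : S × Fin K, |Atil ⟨n, h⟩ p.1 p.2 ω| ≤ 1 / (1 - γ) :=
        ae_all_iff.2 fun p => hAbd ⟨n, h⟩ p.1 p.2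
      filter_upwards [hall] with ω hω
      simp only [hY'def, dif_pos h]
      calc |∑ p : S × Fin K, w p * Atil ⟨n, h⟩ p.1 p.2 ω|
          ≤ ∑ p : S × Fin K, |w p * Atil ⟨n, h⟩ p.1 p.2 ω| := Finset.abs_sum_le_sum_abs _ _
        _ ≤ ∑ p : S × Fin K, w p * c := by
            apply Finset.sum_le_sum
            intro p _
            rw [abs_mul, abs_of_nonneg (hw0 p)]
            apply mul_le_mul_of_nonneg_left _ (hw0 p)
            calc |Atil ⟨n, h⟩ p.1 p.2 ω| ≤ 1 / (1 - γ) := hω p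
              _ = c := hcdef.symm
        _ = c := by rw [← Finset.sum_mul, hwsum, one_mul]
    · filter_upwards with ω
      simp only [hY'def, dif_neg h]
      simpa using hcpos.le
  -- conditional expectation linearity
  have hYlin : ∀ t : Fin Tn, (P[Y' t.val|F t.val])
      =ᵐ[P] fun ω => ∑ p : S × Fin K, w p * (P[Atil t p.1 p.2|F t.val]) ω := by
    intro t
    have he : Y' t.val = ∑ p : S × Fin K, w p • Atil t p.1 p.2 := by
      funext ω
      simp only [hY'def, dif_pos t.isLt, Fin.eta, Finset.sum_apply, Pi.smul_apply,
        smul_eq_mul]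
    rw [he]
    have h1 := condExp_finsetSum (μ := P) (m := F t.val)
      (s := (Finset.univ : Finset (S × Fin K))) (f := fun p => w p • Atil t p.1 p.2)
      (fun p _ => (hAint t p.1 p.2).smul (w p))
    refine h1.trans ?_
    have h2 : ∀ p : S × Fin K,
        (P[w p • Atil t p.1 p.2|F t.val]) =ᵐ[P] w p • P[Atil t p.1 p.2|F t.val] :=
      fun p => condExp_smul (w p) (Atil t p.1 p.2) (F t.val)
    filter_upwards [ae_all_iff.2 h2] with ω hω
    rw [Finset.sum_apply]
    refine Finset.sum_congr rfl fun p _ => ?_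
    rw [hω p]
    simp
  -- conditional expectations are bounded
  have hY'int : ∀ n, Integrable (Y' n) P := fun n =>
    int_of_bdd ((hY'meas n).mono (F.le _)).aestronglyMeasurable (hY'bd n)
  have hCEbd : ∀ n : ℕ, ∀ᵐ ω ∂P, |(P[Y' n|F n]) ω| ≤ c := by
    intro n
    have h1 : P[Y' n|F n] ≤ᵐ[P] fun _ => c := by
      have h := condExp_mono (m := F n) (μ := P) (hY'int n) (integrable_const c)
        ((hY'bd n).mono fun ω h => (abs_le.1 h).2)
      rwa [condExp_const (F.le n)] at h
    have h2 : (fun _ => (-c : ℝ)) ≤ᵐ[P] P[Y' n|F n] := by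
      have h := condExp_mono (m := F n) (μ := P) (integrable_const (-c)) (hY'int n)
        ((hY'bd n).mono fun ω h => (abs_le.1 h).1)
      rwa [condExp_const (F.le n)] at h
    filter_upwards [h1, h2] with ω e1 e2
    rw [abs_le]; exact ⟨e2, e1⟩
  -- parameters
  set L : ℝ := Real.log (1 / δ) with hLdef
  have hL : 0 < L := Real.log_pos ((one_lt_div hδ0).2 hδ1)
  have hTnR : (0 : ℝ) < Tn := by exact_mod_cast hTn
  have hsqpos : (0 : ℝ) < 2 * Tn * L := by positivity
  set aT : ℝ := c * Real.sqrt (2 * Tn * L) with haTdef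
  have haT : 0 < aT := mul_pos hcpos (Real.sqrt_pos.2 hsqpos)
  set lam : ℝ := aT / (Tn * c ^ 2) with hlamdef
  have hlam : 0 < lam := div_pos haT (by positivity)
  set ST : Ω → ℝ := fun ω => ∑ i ∈ Finset.range Tn, ((P[Y' i|F i]) ω - Y' i ω) with hSTdef
  have hazuma := azuma_aux P F c lam hcpos hlam.le Y' hY'meas hY'bd Tn
  have hSTsm : StronglyMeasurable ST := by
    apply Finset.stronglyMeasurable_fun_sum
    intro i _
    exact (stronglyMeasurable_condExp.mono (F.le i)).sub ((hY'meas i).mono (F.le (i + 1)))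
  have hSTbd : ∀ᵐ ω ∂P, |ST ω| ≤ Tn * (2 * c) := by
    filter_upwards [ae_all_iff.2 hY'bd, ae_all_iff.2 hCEbd] with ω e1 e2
    calc |ST ω| ≤ ∑ i ∈ Finset.range Tn, |(P[Y' i|F i]) ω - Y' i ω| :=
          Finset.abs_sum_le_sum_abs _ _
      _ ≤ ∑ _i ∈ Finset.range Tn, 2 * c := by
          apply Finset.sum_le_sum
          intro i _
          calc |(P[Y' i|F i]) ω - Y' i ω| ≤ |(P[Y' i|F i]) ω| + |Y' i ω| := abs_sub _ _
            _ ≤ 2 * c := by linarith [e1 i, e2 i]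
      _ = Tn * (2 * c) := by simp [Finset.sum_const, Finset.card_range]
  have hexpint : Integrable (fun ω => Real.exp (lam * ST ω)) P := by
    apply int_of_bdd ((Real.continuous_exp.comp_stronglyMeasurable
      (stronglyMeasurable_const.mul hSTsm)).aestronglyMeasurable)
      (C := Real.exp (lam * (Tn * (2 * c))))
    filter_upwards [hSTbd] with ω hω
    rw [abs_of_pos (Real.exp_pos _)]
    exact Real.exp_le_exp.2 (mul_le_mul_of_nonneg_left (le_trans (le_abs_self _) hω) hlam.le)
  -- Chernoff bound
  have htail : (P {ω | aT ≤ ST ω}).toReal ≤ δ := by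
    have hmark := mul_meas_ge_le_integral_of_nonneg (μ := P)
      (f := fun ω => Real.exp (lam * ST ω))
      (Filter.Eventually.of_forall fun ω => (Real.exp_pos _).le) hexpint
      (Real.exp (lam * aT))
    have hsubset : {ω | aT ≤ ST ω} ⊆ {ω | Real.exp (lam * aT) ≤ Real.exp (lam * ST ω)} :=
      fun ω h => Real.exp_le_exp.2 (mul_le_mul_of_nonneg_left h hlam.le)
    have e0 : (P {ω | aT ≤ ST ω}).toReal
        ≤ (P {ω | Real.exp (lam * aT) ≤ Real.exp (lam * ST ω)}).toReal :=
      ENNReal.toReal_mono (measure_ne_top _ _) (measure_mono hsubset)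
    have e1 : Real.exp (lam * aT) *
        (P {ω | Real.exp (lam * aT) ≤ Real.exp (lam * ST ω)}).toReal
        ≤ Real.exp (Tn * (lam ^ 2 * c ^ 2 / 2)) := le_trans hmark hazuma
    have e2 : (P {ω | Real.exp (lam * aT) ≤ Real.exp (lam * ST ω)}).toReal
        ≤ Real.exp (Tn * (lam ^ 2 * c ^ 2 / 2) - lam * aT) := by
      rw [Real.exp_sub, le_div_iff₀ (Real.exp_pos _), mul_comm]
      exact e1
    have haT2 : aT ^ 2 = c ^ 2 * (2 * Tn * L) := by
      rw [haTdef, mul_pow, Real.sq_sqrt hsqpos.le]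
    have e3 : Tn * (lam ^ 2 * c ^ 2 / 2) - lam * aT = -L := by
      rw [hlamdef, div_pow]
      have hc2 : (c : ℝ) ^ 2 ≠ 0 := by positivity
      have hTn2 : ((Tn : ℝ) * c ^ 2) ^ 2 ≠ 0 := by positivity
      field_simp
      nlinarith [haT2]
    have e4 : Real.exp (-L) = δ := by
      rw [hLdef, one_div, Real.log_inv, neg_neg, Real.exp_log hδ0]
    calc (P {ω | aT ≤ ST ω}).toReal
        ≤ Real.exp (Tn * (lam ^ 2 * c ^ 2 / 2) - lam * aT) := le_trans e0 e2
      _ = δ := by rw [e3, e4]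
  have hmeasset : MeasurableSet {ω | aT ≤ ST ω} :=
    measurableSet_le measurable_const hSTsm.measurable
  -- the deterministic a.e. implication
  have hae : ∀ᵐ ω ∂P, ST ω < aT →
      (Vstar s0 - (1 / (Tn : ℝ)) * ∑ t, V t ω s0
        ≤ ε / (1 - γ) + B / ((1 - γ) ^ 2 * Tn)
          + (1 / (1 - γ) ^ 2) * Real.sqrt (2 * L / Tn)) := by
    have hall_bias : ∀ᵐ ω ∂P, ∀ t s k,
        |(P[Atil t s k|F t.val]) ω -
          (∑ a, experts k s a *
            ((r s a + γ * ∑ s', T s a s' * V t ω s') - V t ω s))| ≤ ε :=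
      ae_all_iff.2 fun t => ae_all_iff.2 fun s => ae_all_iff.2 fun k => hbias t s k
    have hall_lin : ∀ᵐ ω ∂P, ∀ t : Fin Tn, (P[Y' t.val|F t.val]) ω
        = ∑ p : S × Fin K, w p * (P[Atil t p.1 p.2|F t.val]) ω := ae_all_iff.2 hYlin
    filter_upwards [hall_bias, hall_lin, hregret] with ω hbiasω hlinω hregω
    intro hlt
    -- per-round bound
    have hper : ∀ t : Fin Tn, Vstar s0 - V t ω s0
        ≤ ε * c + c * ∑ p : S × Fin K, w p * (P[Atil t p.1 p.2|F t.val]) ω := by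
      intro t
      have hsol := hNsolve
        (fun s => ∑ k, qstar s k * ∑ a, experts k s a *
          ((r s a + γ * ∑ s', T s a s' * V t ω s') - V t ω s))
        (fun s => Vstar s - V t ω s)
        (fun i => bellman_diff T r γ experts hexp1 qstar hqs1 Vstar (V t ω) hVstar i) s0
      have hfb : ∀ s, (∑ k, qstar s k * ∑ a, experts k s a *
          ((r s a + γ * ∑ s', T s a s' * V t ω s') - V t ω s))
          ≤ ε + ∑ k, qstar s k * (P[Atil t s k|F t.val]) ω := by
        intro s
        calc ∑ k, qstar s k * ∑ a, experts k s a *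
              ((r s a + γ * ∑ s', T s a s' * V t ω s') - V t ω s)
            ≤ ∑ k, qstar s k * ((P[Atil t s k|F t.val]) ω + ε) := by
              apply Finset.sum_le_sum
              intro k _
              apply mul_le_mul_of_nonneg_left _ (hqs0 s k)
              have h := (abs_le.1 (hbiasω t s k)).1
              linarith
          _ = (∑ k, qstar s k * (P[Atil t s k|F t.val]) ω) + ε := by
              simp only [mul_add]
              rw [Finset.sum_add_distrib, ← Finset.sum_mul, hqs1 s, one_mul]
          _ = ε + ∑ k, qstar s k * (P[Atil t s k|F t.val]) ω := add_comm _ _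
      have hsum1 : ∑ p : S × Fin K, w p * (P[Atil t p.1 p.2|F t.val]) ω
          = (1 - γ) * ∑ s, N s0 s * ∑ k, qstar s k * (P[Atil t s k|F t.val]) ω := by
        rw [Fintype.sum_prod_type, Finset.mul_sum]
        refine Finset.sum_congr rfl fun s _ => ?_
        rw [Finset.mul_sum, Finset.mul_sum]
        refine Finset.sum_congr rfl fun k _ => ?_
        simp only [hwdef]
        ring
      calc Vstar s0 - V t ω s0
          = ∑ s, N s0 s * (∑ k, qstar s k * ∑ a, experts k s a *
              ((r s a + γ * ∑ s', T s a s' * V t ω s') - V t ω s)) := hsol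
        _ ≤ ∑ s, N s0 s * (ε + ∑ k, qstar s k * (P[Atil t s k|F t.val]) ω) :=
            Finset.sum_le_sum fun s _ => mul_le_mul_of_nonneg_left (hfb s) (hN0 s0 s)
        _ = ε * c + c * ∑ p : S × Fin K, w p * (P[Atil t p.1 p.2|F t.val]) ω := by
            rw [hsum1]
            rw [show (∑ s, N s0 s * (ε + ∑ k, qstar s k * (P[Atil t s k|F t.val]) ω))
              = ∑ s, (N s0 s * ε + N s0 s * ∑ k, qstar s k * (P[Atil t s k|F t.val]) ω)
              from Finset.sum_congr rfl fun s _ => mul_add _ _ _,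
              Finset.sum_add_distrib, ← Finset.sum_mul, hNsum']
            rw [← mul_assoc, mul_comm c (1 - γ), mul_comm c ε]
            rw [mul_comm (1 - γ) c, hc1, one_mul]
    -- sum over rounds
    have hCEsum : ∑ t : Fin Tn, ∑ p : S × Fin K, w p * (P[Atil t p.1 p.2|F t.val]) ω
        = ST ω + ∑ i ∈ Finset.range Tn, Y' i ω := by
      have h1 : ∑ t : Fin Tn, ∑ p : S × Fin K, w p * (P[Atil t p.1 p.2|F t.val]) ω
          = ∑ i ∈ Finset.range Tn, (P[Y' i|F i]) ω := by
        rw [← Fin.sum_univ_eq_sum_range (fun i => (P[Y' i|F i]) ω) Tn]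
        exact Finset.sum_congr rfl fun t _ => (hlinω t).symm
      rw [h1, hSTdef]
      rw [← Finset.sum_add_distrib]
      exact Finset.sum_congr rfl fun i _ => by ring
    have hYsum : ∑ i ∈ Finset.range Tn, Y' i ω ≤ B * c := by
      rw [← Fin.sum_univ_eq_sum_range (fun i => Y' i ω) Tn]
      have he : ∀ t : Fin Tn, Y' t.val ω = ∑ p : S × Fin K, w p * Atil t p.1 p.2 ω := by
        intro t
        simp only [hY'def, dif_pos t.isLt, Fin.eta]
      rw [Finset.sum_congr rfl fun t _ => he t, Finset.sum_comm]
      calc ∑ p : S × Fin K, ∑ t, w p * Atil t p.1 p.2 ω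
          = ∑ p : S × Fin K, w p * ∑ t, Atil t p.1 p.2 ω :=
            Finset.sum_congr rfl fun p _ => (Finset.mul_sum _ _ _).symm
        _ ≤ ∑ p : S × Fin K, w p * (B / (1 - γ)) :=
            Finset.sum_le_sum fun p _ =>
              mul_le_mul_of_nonneg_left (hregω p.1 p.2) (hw0 p)
        _ = B / (1 - γ) := by rw [← Finset.sum_mul, hwsum, one_mul]
        _ = B * c := by rw [hcdef]; ring
    have htotal : ∑ t : Fin Tn, (Vstar s0 - V t ω s0)
        ≤ ε * c * Tn + c * (aT + B * c) := by
      calc ∑ t : Fin Tn, (Vstar s0 - V t ω s0)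
          ≤ ∑ t : Fin Tn, (ε * c + c * ∑ p : S × Fin K,
              w p * (P[Atil t p.1 p.2|F t.val]) ω) := Finset.sum_le_sum fun t _ => hper t
        _ = ε * c * Tn + c * ∑ t : Fin Tn, ∑ p : S × Fin K,
              w p * (P[Atil t p.1 p.2|F t.val]) ω := by
            rw [Finset.sum_add_distrib, Finset.sum_const, Finset.card_univ,
              Fintype.card_fin, ← Finset.mul_sum, nsmul_eq_mul]
            ring
        _ = ε * c * Tn + c * (ST ω + ∑ i ∈ Finset.range Tn, Y' i ω) := by rw [hCEsum]
        _ ≤ ε * c * Tn + c * (aT + B * c) := by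
            have h := add_le_add (le_of_lt hlt) hYsum
            have h2 := mul_le_mul_of_nonneg_left h hcpos.le
            linarith
    have hdiff : Vstar s0 - (1 / (Tn : ℝ)) * ∑ t, V t ω s0
        = (1 / (Tn : ℝ)) * ∑ t : Fin Tn, (Vstar s0 - V t ω s0) := by
      rw [Finset.sum_sub_distrib, Finset.sum_const, Finset.card_univ, Fintype.card_fin,
        nsmul_eq_mul]
      field_simp
    rw [hdiff]
    have hstep : (1 / (Tn : ℝ)) * ∑ t : Fin Tn, (Vstar s0 - V t ω s0)
        ≤ (1 / (Tn : ℝ)) * (ε * c * Tn + c * (aT + B * c)) :=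
      mul_le_mul_of_nonneg_left htotal (by positivity)
    refine le_trans hstep ?_
    have hsqrt : Real.sqrt (2 * L / Tn) = Real.sqrt (2 * Tn * L) / Tn := by
      rw [show 2 * L / (Tn : ℝ) = (2 * Tn * L) / (Tn : ℝ) ^ 2 from by field_simp,
        Real.sqrt_div hsqpos.le, Real.sqrt_sq hTnR.le]
    rw [hsqrt, haTdef]
    apply le_of_eq
    rw [hcdef]
    field_simp
    ring
  -- conclusion
  have hfinal : P {ω | ST ω < aT}
      ≤ P {ω | Vstar s0 - (1 / (Tn : ℝ)) * ∑ t, V t ω s0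
        ≤ ε / (1 - γ) + B / ((1 - γ) ^ 2 * Tn)
          + (1 / (1 - γ) ^ 2) * Real.sqrt (2 * Real.log (1 / δ) / Tn)} := by
    apply measure_mono_ae
    filter_upwards [hae] with ω h hst
    exact h hst
  refine le_trans ?_ hfinal
  have hcompl : {ω | ST ω < aT} = {ω | aT ≤ ST ω}ᶜ := by
    ext ω; simp [not_le]
  rw [hcompl, prob_compl_eq_one_sub hmeasset]
  have hPle : P {ω | aT ≤ ST ω} ≤ ENNReal.ofReal δ := by
    rw [← ENNReal.ofReal_toReal (measure_ne_top P _)]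
    exact ENNReal.ofReal_le_ofReal htail
  have h1 : ENNReal.ofReal (1 - δ) + P {ω | aT ≤ ST ω} ≤ 1 := by
    calc ENNReal.ofReal (1 - δ) + P {ω | aT ≤ ST ω}
        ≤ ENNReal.ofReal (1 - δ) + ENNReal.ofReal δ := add_le_add_right hPle _
      _ = ENNReal.ofReal 1 := by rw [← ENNReal.ofReal_add (by linarith) hδ0.le]; norm_num
      _ = 1 := ENNReal.ofReal_one
  exact ENNReal.le_sub_of_add_le_right (measure_ne_top P _) h1
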